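/- Let $g$ be a dyadic distribution on $\mathbb{R}^2$ with finitely many non-zero Haar coefficients, all associated to dyadic rectangles contained in an open set $\Omega_0$ of finite measure. Suppose $\{\Omega_i\}_{i\ge 0}$ is a contracting family with $\Omega_{i+1} = \{S_d(g|\Omega_i) > 2^{\lambda_i}\}^\sim \cap \Omega_i$ for integers $\lambda_i$. Then the pieces $g_i := \sum_{R\subseteq\Omega_i,\ R\not\subseteq\Omega_{i+1}} g_R h_R$ satisfy $\int S_d(g_i)^2 \le 2\cdot 2^{2\lambda_i}|\Omega_i|$. -/

import Mathlib

open MeasureTheory Set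
open scoped ENNReal NNReal

noncomputable section

/-- The dyadic interval `[2^k n, 2^k (n+1))`. -/
def dyadicInterval (k n : ℤ) : Set ℝ := Set.Ico ((2 : ℝ) ^ k * n) ((2 : ℝ) ^ k * (n + 1))

/-- Index for dyadic rectangles: scales and positions in each coordinate. -/
abbrev DyadicRect := (ℤ × ℤ) × ℤ × ℤ

/-- The dyadic rectangle in the plane indexed by `R`. -/
def dyadicRect (R : DyadicRect) : Set (ℝ × ℝ) :=
  (dyadicInterval R.1.1 R.1.2) ×ˢ (dyadicInterval R.2.1 R.2.2)

/-- The measure `|R|` of a dyadic rectangle, as an extended nonnegative real. -/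
def rectVol (R : DyadicRect) : ℝ≥0∞ := (2 : ℝ≥0∞) ^ R.1.1 * (2 : ℝ≥0∞) ^ R.2.1

/-- The bi-parameter dyadic square function of a family of Haar coefficients `c`:
`S_d(c)(x) = (∑_R c_R² χ_R(x)/|R|)^{1/2}`. -/
def Sd (c : DyadicRect → ℝ) (x : ℝ × ℝ) : ℝ≥0∞ :=
  (∑' R : DyadicRect,
      (dyadicRect R).indicator (fun _ => ENNReal.ofReal (c R ^ 2) / rectVol R) x) ^ (1 / 2 : ℝ)

/-- The average `⟨f⟩_R` of `f` over the dyadic rectangle `R`. -/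
def rectAvg (f : ℝ × ℝ → ℝ) (R : DyadicRect) : ℝ :=
  (∫ y in dyadicRect R, f y) / (rectVol R).toReal

/-- The bi-parameter dyadic maximal function `M_d(f)(x) = sup_{R ∋ x} |⟨f⟩_R|`. -/
def Md (f : ℝ × ℝ → ℝ) (x : ℝ × ℝ) : ℝ≥0∞ :=
  ⨆ R : DyadicRect, (dyadicRect R).indicator (fun _ => ENNReal.ofReal |rectAvg f R|) x

end

noncomputable section
open Classical in
/-- The localized bi-parameter dyadic square function
`S_d(g|Ω) = (∑_{R ⊆ Ω} g_R² χ_R/|R|)^{1/2}`. -/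
def SdLoc (c : DyadicRect → ℝ) (Ω : Set (ℝ × ℝ)) (x : ℝ × ℝ) : ℝ≥0∞ :=
  (∑' R : DyadicRect,
      if dyadicRect R ⊆ Ω then
        (dyadicRect R).indicator (fun _ => ENNReal.ofReal (c R ^ 2) / rectVol R) x
      else 0) ^ (1 / 2 : ℝ)

/-- An open axis-parallel rectangle in the plane. -/
def IsAxisRect (S : Set (ℝ × ℝ)) : Prop :=
  ∃ a b c d : ℝ, a < b ∧ c < d ∧ S = Set.Ioo a b ×ˢ Set.Ioo c d

/-- The strong maximal function of the indicator of `Ω`: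
`M(χ_Ω)(x) = sup_{x ∈ S} |S ∩ Ω| / |S|`, the supremum over axis-parallel rectangles. -/
def strongMaxInd (Ω : Set (ℝ × ℝ)) (x : ℝ × ℝ) : ℝ≥0∞ :=
  ⨆ (S : Set (ℝ × ℝ)) (_ : IsAxisRect S) (_ : x ∈ S), volume (S ∩ Ω) / volume S

/-- The standard enlargement `Ω̃ = {M(χ_Ω) > 1/2}` of an open set. -/
def enlarge (Ω : Set (ℝ × ℝ)) : Set (ℝ × ℝ) := {x | 1 / 2 < strongMaxInd Ω x}

end

-- ### Auxiliary lemmas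

lemma aux_measurableSet_dyadicRect (R : DyadicRect) : MeasurableSet (dyadicRect R) :=
  measurableSet_Ico.prod measurableSet_Ico

lemma aux_ofReal_two_zpow (k : ℤ) : ENNReal.ofReal ((2:ℝ) ^ k) = (2:ℝ≥0∞) ^ k := by
  rw [← Real.rpow_intCast, ← ENNReal.ofReal_rpow_of_pos two_pos, ENNReal.rpow_intCast]
  norm_num

lemma aux_volume_dyadicRect (R : DyadicRect) : volume (dyadicRect R) = rectVol R := by
  rw [dyadicRect, dyadicInterval, dyadicInterval, Measure.volume_eq_prod, Measure.prod_prod,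
    Real.volume_Ico, Real.volume_Ico,
    show (2:ℝ) ^ R.1.1 * (R.1.2 + 1) - (2:ℝ) ^ R.1.1 * R.1.2 = (2:ℝ) ^ R.1.1 by ring,
    show (2:ℝ) ^ R.2.1 * (R.2.2 + 1) - (2:ℝ) ^ R.2.1 * R.2.2 = (2:ℝ) ^ R.2.1 by ring,
    aux_ofReal_two_zpow, aux_ofReal_two_zpow, rectVol]

lemma aux_rectVol_ne_zero (R : DyadicRect) : rectVol R ≠ 0 :=
  mul_ne_zero (ENNReal.zpow_pos two_ne_zero ENNReal.ofNat_ne_top _).ne'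
    (ENNReal.zpow_pos two_ne_zero ENNReal.ofNat_ne_top _).ne'

lemma aux_rectVol_ne_top (R : DyadicRect) : rectVol R ≠ ⊤ :=
  ENNReal.mul_ne_top (ENNReal.zpow_lt_top two_ne_zero ENNReal.ofNat_ne_top _).ne
    (ENNReal.zpow_lt_top two_ne_zero ENNReal.ofNat_ne_top _).ne

lemma aux_measurable_SdLoc (c : DyadicRect → ℝ) (Ω : Set (ℝ × ℝ)) :
    Measurable (SdLoc c Ω) := by
  unfold SdLoc
  refine Measurable.pow_const ?_ _
  refine Measurable.ennreal_tsum fun R => ?_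
  by_cases h : dyadicRect R ⊆ Ω
  · simpa [h] using (measurable_const.indicator (aux_measurableSet_dyadicRect R))
  · simp [h]

lemma aux_isOpen_enlarge (U : Set (ℝ × ℝ)) : IsOpen (enlarge U) := by
  rw [isOpen_iff_mem_nhds]
  intro x hx
  rw [enlarge, mem_setOf_eq, strongMaxInd] at hx
  simp only [lt_iSup_iff] at hx
  obtain ⟨S, hS, hxS, hlt⟩ := hx
  obtain ⟨a, b, c, d, hab, hcd, rfl⟩ := hS
  refine Filter.mem_of_superset ((isOpen_Ioo.prod isOpen_Ioo).mem_nhds hxS) ?_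
  intro y hy
  show 1 / 2 < strongMaxInd U y
  exact lt_of_lt_of_le hlt
    (le_iSup_of_le _ (le_iSup_of_le ⟨a, b, c, d, hab, hcd, rfl⟩ (le_iSup_of_le hy le_rfl)))

lemma aux_half (U : Set (ℝ × ℝ)) {a b c d : ℝ} (hab : a < b) (hcd : c < d) {x : ℝ × ℝ}
    (hx : x ∈ Set.Ico a b ×ˢ Set.Ico c d) (hxe : x ∉ enlarge U) :
    volume ((Set.Ico a b ×ˢ Set.Ico c d) ∩ U) ≤ volume (Set.Ico a b ×ˢ Set.Ico c d) / 2 := by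
  have hmax : strongMaxInd U x ≤ 1 / 2 := not_lt.1 hxe
  have key : ∀ ε : ℝ, 0 < ε → volume ((Set.Ico a b ×ˢ Set.Ico c d) ∩ U)
      ≤ 2⁻¹ * ENNReal.ofReal ((b - (a - ε)) * (d - (c - ε))) := by
    intro ε hε
    set S := Set.Ioo (a - ε) b ×ˢ Set.Ioo (c - ε) d with hSdef
    have hsub : Set.Ico a b ×ˢ Set.Ico c d ⊆ S := by
      rintro p ⟨⟨h1, h2⟩, h3, h4⟩
      exact ⟨⟨by linarith, h2⟩, by linarith, h4⟩
    have hvolS : volume S = ENNReal.ofReal (b - (a - ε)) * ENNReal.ofReal (d - (c - ε)) := by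
      rw [hSdef, Measure.volume_eq_prod, Measure.prod_prod, Real.volume_Ioo, Real.volume_Ioo]
    have hS0 : volume S ≠ 0 := by
      rw [hvolS]
      exact mul_ne_zero (ENNReal.ofReal_pos.2 (by linarith)).ne'
        (ENNReal.ofReal_pos.2 (by linarith)).ne'
    have hStop : volume S ≠ ⊤ := by
      rw [hvolS]; exact ENNReal.mul_ne_top ENNReal.ofReal_ne_top ENNReal.ofReal_ne_top
    have hS' : IsAxisRect S := ⟨a - ε, b, c - ε, d, by linarith, by linarith, hSdef⟩
    have hx' : x ∈ S := hsub hx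
    have hratio : volume (S ∩ U) / volume S ≤ 1 / 2 := by
      refine le_trans ?_ hmax
      rw [strongMaxInd]
      refine le_iSup_of_le S ?_
      refine le_iSup_of_le hS' ?_
      exact le_iSup_of_le hx' le_rfl
    calc volume ((Set.Ico a b ×ˢ Set.Ico c d) ∩ U) ≤ volume (S ∩ U) :=
          measure_mono (inter_subset_inter_left _ hsub)
      _ ≤ 1 / 2 * volume S := (ENNReal.div_le_iff hS0 hStop).1 hratio
      _ = 2⁻¹ * ENNReal.ofReal ((b - (a - ε)) * (d - (c - ε))) := by
          rw [hvolS, one_div, ← ENNReal.ofReal_mul (by linarith)]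
  have hvol : volume (Set.Ico a b ×ˢ Set.Ico c d) = ENNReal.ofReal ((b - a) * (d - c)) := by
    rw [Measure.volume_eq_prod, Measure.prod_prod, Real.volume_Ico, Real.volume_Ico,
      ← ENNReal.ofReal_mul (by linarith)]
  rw [hvol, div_eq_mul_inv, mul_comm]
  have h1 : Filter.Tendsto (fun ε : ℝ => (b - (a - ε)) * (d - (c - ε))) (nhds 0)
      (nhds ((b - a) * (d - c))) := by
    have hcont : Continuous fun ε : ℝ => (b - (a - ε)) * (d - (c - ε)) := by continuity
    simpa using hcont.tendsto 0
  have h2 : Filter.Tendsto (fun ε : ℝ => ENNReal.ofReal ((b - (a - ε)) * (d - (c - ε))))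
      (nhds 0) (nhds (ENNReal.ofReal ((b - a) * (d - c)))) :=
    (ENNReal.continuous_ofReal.tendsto _).comp h1
  have htend : Filter.Tendsto
      (fun ε : ℝ => 2⁻¹ * ENNReal.ofReal ((b - (a - ε)) * (d - (c - ε))))
      (nhdsWithin 0 (Set.Ioi 0)) (nhds (2⁻¹ * ENNReal.ofReal ((b - a) * (d - c)))) :=
    (ENNReal.Tendsto.const_mul h2 (Or.inr (by simp))).mono_left nhdsWithin_le_nhds
  exact ge_of_tendsto htend
    (Filter.eventually_of_mem self_mem_nhdsWithin fun ε hε => key ε hε)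

open Classical in
/-- For `g` with finitely many non-zero Haar coefficients, all supported in
rectangles inside `Ω₀`, and the stopping sets `Ω_{i+1} = {S_d(g|Ω_i) > 2^{λ_i}}∼ ∩ Ω_i` forming
a contracting family, the pieces `g_i = ∑_{R ⊆ Ω_i, R ⊄ Ω_{i+1}} g_R h_R` satisfy
`∫ S_d(g_i)² ≤ 2 · 2^{2λ_i} |Ω_i|`. -/
theorem stopping_pieces_L2_bound (Ω₀ : Set (ℝ × ℝ)) (hopen : IsOpen Ω₀)
    (hfin : volume Ω₀ < ⊤)
    (g : DyadicRect → ℝ) (hfs : (Function.support g).Finite)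
    (hsupp : ∀ R, g R ≠ 0 → dyadicRect R ⊆ Ω₀)
    (Ω : ℕ → Set (ℝ × ℝ)) (lam : ℕ → ℤ)
    (hΩ₀ : Ω 0 = Ω₀)
    (hrec : ∀ i, Ω (i + 1) = enlarge {x | (2 : ℝ≥0∞) ^ lam i < SdLoc g (Ω i) x} ∩ Ω i)
    (hhalf : ∀ i, volume (Ω (i + 1)) ≤ volume (Ω i) / 2)
    (i : ℕ) :
    ∫⁻ x,
        Sd (fun R => if dyadicRect R ⊆ Ω i ∧ ¬dyadicRect R ⊆ Ω (i + 1) then g R else 0) x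
          ^ (2 : ℝ)
      ≤ 2 * (2 : ℝ≥0∞) ^ (2 * lam i) * volume (Ω i) := by
  classical
  have main : ∀ cf : DyadicRect → ℝ,
      (∀ R, cf R = if dyadicRect R ⊆ Ω i ∧ ¬dyadicRect R ⊆ Ω (i + 1) then g R else 0) →
      (∫⁻ x, Sd cf x ^ (2 : ℝ)) ≤ 2 * (2 : ℝ≥0∞) ^ (2 * lam i) * volume (Ω i) := by
    intro cf hcf
    set U : Set (ℝ × ℝ) := {x | (2 : ℝ≥0∞) ^ lam i < SdLoc g (Ω i) x} with hUdef
    have hUmeas : MeasurableSet U :=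
      measurableSet_lt measurable_const (aux_measurable_SdLoc g (Ω i))
    set E : Set (ℝ × ℝ) := Uᶜ ∩ Ω i with hEdef
    have hΩopen : ∀ j, IsOpen (Ω j) := by
      intro j; induction j with
      | zero => rw [hΩ₀]; exact hopen
      | succ n ih => rw [hrec]; exact (aux_isOpen_enlarge _).inter ih
    have hEmeas : MeasurableSet E := hUmeas.compl.inter (hΩopen i).measurableSet
    -- Step A : the integral equals the sum of squared coefficients
    have hA : (∫⁻ x, Sd cf x ^ (2 : ℝ)) = ∑' R : DyadicRect, ENNReal.ofReal (cf R ^ 2) := by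
      have hpt : ∀ x, Sd cf x ^ (2 : ℝ) = ∑' R : DyadicRect,
          (dyadicRect R).indicator (fun _ => ENNReal.ofReal (cf R ^ 2) / rectVol R) x := by
        intro x
        rw [Sd, ← ENNReal.rpow_mul]
        norm_num
      rw [lintegral_congr hpt,
        lintegral_tsum fun R =>
          (measurable_const.indicator (aux_measurableSet_dyadicRect R)).aemeasurable]
      refine tsum_congr fun R => ?_
      rw [lintegral_indicator_const (aux_measurableSet_dyadicRect R), aux_volume_dyadicRect,
        ENNReal.div_mul_cancel (aux_rectVol_ne_zero R) (aux_rectVol_ne_top R)]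
    -- Key geometric estimate
    have hkey : ∀ R : DyadicRect, dyadicRect R ⊆ Ω i → ¬dyadicRect R ⊆ Ω (i + 1) →
        rectVol R / 2 ≤ volume (dyadicRect R ∩ E) := by
      intro R hsub hnsub
      obtain ⟨x, hxR, hxn⟩ := not_subset.1 hnsub
      have hxΩ : x ∈ Ω i := hsub hxR
      have hxen : x ∉ enlarge U := fun h => hxn (by rw [hrec]; exact ⟨h, hxΩ⟩)
      have hab : (2:ℝ) ^ R.1.1 * R.1.2 < (2:ℝ) ^ R.1.1 * (R.1.2 + 1) := by
        have h2 : (0:ℝ) < 2 ^ R.1.1 := zpow_pos (by norm_num) _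
        nlinarith
      have hcd : (2:ℝ) ^ R.2.1 * R.2.2 < (2:ℝ) ^ R.2.1 * (R.2.2 + 1) := by
        have h2 : (0:ℝ) < 2 ^ R.2.1 := zpow_pos (by norm_num) _
        nlinarith
      have hhalfU : volume (dyadicRect R ∩ U) ≤ volume (dyadicRect R) / 2 :=
        aux_half U hab hcd hxR hxen
      have hRE : dyadicRect R ∩ E = dyadicRect R \ U := by
        ext p
        constructor
        · rintro ⟨hp, hpU, _⟩; exact ⟨hp, hpU⟩
        · rintro ⟨hp, hpU⟩; exact ⟨hp, hpU, hsub hp⟩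
      rw [hRE]
      have hsum : volume (dyadicRect R ∩ U) + volume (dyadicRect R \ U)
          = volume (dyadicRect R) := measure_inter_add_diff _ hUmeas
      have hvR : volume (dyadicRect R) = rectVol R := aux_volume_dyadicRect R
      have h2 : rectVol R / 2 + rectVol R / 2 ≤ rectVol R / 2 + volume (dyadicRect R \ U) := by
        calc rectVol R / 2 + rectVol R / 2 = rectVol R := ENNReal.add_halves _
          _ = volume (dyadicRect R ∩ U) + volume (dyadicRect R \ U) := by rw [hsum, hvR]
          _ ≤ rectVol R / 2 + volume (dyadicRect R \ U) :=
              add_le_add (hhalfU.trans_eq (by rw [hvR])) le_rfl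
      exact (ENNReal.add_le_add_iff_left
        (ENNReal.div_lt_top (aux_rectVol_ne_top R) two_ne_zero).ne).1 h2
    -- Step B : termwise bound
    have hB : ∀ R : DyadicRect, ENNReal.ofReal (cf R ^ 2) ≤ 2 *
        (if dyadicRect R ⊆ Ω i then
          ENNReal.ofReal (g R ^ 2) / rectVol R * volume (dyadicRect R ∩ E) else 0) := by
      intro R
      by_cases h : dyadicRect R ⊆ Ω i ∧ ¬dyadicRect R ⊆ Ω (i + 1)
      · rw [hcf R, if_pos h, if_pos h.1]
        have hge := hkey R h.1 h.2
        have heq : 2 * (ENNReal.ofReal (g R ^ 2) / rectVol R * (rectVol R / 2))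
            = ENNReal.ofReal (g R ^ 2) := by
          rw [← mul_div_assoc,
            ENNReal.div_mul_cancel (aux_rectVol_ne_zero R) (aux_rectVol_ne_top R),
            mul_comm, ENNReal.div_mul_cancel two_ne_zero ENNReal.ofNat_ne_top]
        calc ENNReal.ofReal (g R ^ 2)
            = 2 * (ENNReal.ofReal (g R ^ 2) / rectVol R * (rectVol R / 2)) := heq.symm
          _ ≤ 2 * (ENNReal.ofReal (g R ^ 2) / rectVol R * volume (dyadicRect R ∩ E)) := by
              gcongr
      · rw [hcf R, if_neg h]
        simp
    -- Step C : the sum equals the localized integral over E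
    have hC : (∑' R : DyadicRect, (if dyadicRect R ⊆ Ω i then
          ENNReal.ofReal (g R ^ 2) / rectVol R * volume (dyadicRect R ∩ E) else 0))
        = ∫⁻ x in E, SdLoc g (Ω i) x ^ (2 : ℝ) := by
      have hpt : ∀ x, SdLoc g (Ω i) x ^ (2 : ℝ) = ∑' R : DyadicRect,
          (if dyadicRect R ⊆ Ω i then
            (dyadicRect R).indicator (fun _ => ENNReal.ofReal (g R ^ 2) / rectVol R) x
          else 0) := by
        intro x
        rw [SdLoc, ← ENNReal.rpow_mul]
        norm_num
      have hmeas : ∀ R : DyadicRect, AEMeasurable (fun x => if dyadicRect R ⊆ Ω i then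
          (dyadicRect R).indicator (fun _ => ENNReal.ofReal (g R ^ 2) / rectVol R) x else 0)
          (volume.restrict E) := by
        intro R
        by_cases h : dyadicRect R ⊆ Ω i
        · simpa [h] using
            (measurable_const.indicator (aux_measurableSet_dyadicRect R)).aemeasurable
        · simp [h]
      rw [lintegral_congr hpt, lintegral_tsum hmeas]
      refine tsum_congr fun R => ?_
      by_cases h : dyadicRect R ⊆ Ω i
      · rw [if_pos h]
        simp only [if_pos h]
        rw [lintegral_indicator (aux_measurableSet_dyadicRect R),
          setLIntegral_const, Measure.restrict_apply (aux_measurableSet_dyadicRect R)]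
      · rw [if_neg h]
        simp only [if_neg h]
        simp
    -- Step D : the localized integral is bounded
    have hD : (∫⁻ x in E, SdLoc g (Ω i) x ^ (2 : ℝ))
        ≤ (2 : ℝ≥0∞) ^ (2 * lam i) * volume (Ω i) := by
      calc (∫⁻ x in E, SdLoc g (Ω i) x ^ (2 : ℝ))
          ≤ ∫⁻ _ in E, (2 : ℝ≥0∞) ^ (2 * lam i) := by
            refine lintegral_mono_ae ?_
            filter_upwards [ae_restrict_mem hEmeas] with x hx
            have hx1 : SdLoc g (Ω i) x ≤ (2 : ℝ≥0∞) ^ lam i := not_lt.1 hx.1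
            calc SdLoc g (Ω i) x ^ (2 : ℝ)
                ≤ ((2 : ℝ≥0∞) ^ lam i) ^ (2 : ℝ) := ENNReal.rpow_le_rpow hx1 (by norm_num)
              _ = (2 : ℝ≥0∞) ^ (2 * lam i) := by
                  rw [show (2:ℝ) = ((2:ℕ):ℝ) by norm_num, ENNReal.rpow_natCast, pow_two,
                    two_mul, ENNReal.zpow_add two_ne_zero ENNReal.ofNat_ne_top]
        _ = (2 : ℝ≥0∞) ^ (2 * lam i) * volume E := setLIntegral_const E _
        _ ≤ (2 : ℝ≥0∞) ^ (2 * lam i) * volume (Ω i) :=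
            mul_le_mul_right (measure_mono inter_subset_right) _
    -- Assemble
    calc (∫⁻ x, Sd cf x ^ (2 : ℝ)) = ∑' R : DyadicRect, ENNReal.ofReal (cf R ^ 2) := hA
      _ ≤ ∑' R : DyadicRect, 2 * (if dyadicRect R ⊆ Ω i then
            ENNReal.ofReal (g R ^ 2) / rectVol R * volume (dyadicRect R ∩ E) else 0) :=
          ENNReal.tsum_le_tsum hB
      _ = 2 * ∑' R : DyadicRect, (if dyadicRect R ⊆ Ω i then
            ENNReal.ofReal (g R ^ 2) / rectVol R * volume (dyadicRect R ∩ E) else 0) :=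
          ENNReal.tsum_mul_left
      _ = 2 * ∫⁻ x in E, SdLoc g (Ω i) x ^ (2 : ℝ) := by rw [hC]
      _ ≤ 2 * ((2 : ℝ≥0∞) ^ (2 * lam i) * volume (Ω i)) := mul_le_mul_right hD _
      _ = 2 * (2 : ℝ≥0∞) ^ (2 * lam i) * volume (Ω i) := (mul_assoc _ _ _).symm
  exact main _ fun R => rfl
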